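/- If G is quasi-strongly connected, then zero is a simple root of the minimal polynomial of the edge Laplacian L_e, i.e., the zero eigenvalue of L_e is semisimple (its geometric multiplicity equals its algebraic multiplicity L−N+1). -/

import Mathlib

open Matrix Polynomial

namespace EdgeLapAux

variable {N L : ℕ} {src tgt : Fin L → Fin N}

/-- entry formula for `Eᵀ *ᵥ y`. -/
lemma ET_mulVec {K : Type*} [Field K] (hst : ∀ k, src k ≠ tgt k)
    (E' : Matrix (Fin N) (Fin L) K)
    (hE' : ∀ i k, E' i k = if i = src k then 1 else if i = tgt k then -1 else 0)
    (y : Fin N → K) (k : Fin L) :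
    E'ᵀ.mulVec y k = y (src k) - y (tgt k) := by
  have h1 : ∀ i, E' i k * y i =
      (if i = src k then y i else 0) - (if i = tgt k then y i else 0) := by
    intro i
    rw [hE']
    by_cases h1 : i = src k
    · by_cases h2 : i = tgt k
      · exact absurd (h1.symm.trans h2) (hst k)
      · simp [h1, h2, hst k, Ne.symm (hst k)]
    · by_cases h2 : i = tgt k
      · simp [h1, h2, hst k, Ne.symm (hst k)]
      · simp [h1, h2]
  simp only [mulVec, dotProduct, transpose_apply]
  rw [Finset.sum_congr rfl fun i _ => h1 i, Finset.sum_sub_distrib,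
    Finset.sum_ite_eq' Finset.univ (src k) y, Finset.sum_ite_eq' Finset.univ (tgt k) y]
  simp

lemma ET_mulVec_const {K : Type*} [Field K] (hst : ∀ k, src k ≠ tgt k)
    (E' : Matrix (Fin N) (Fin L) K)
    (hE' : ∀ i k, E' i k = if i = src k then 1 else if i = tgt k then -1 else 0)
    (c : K) : E'ᵀ.mulVec (fun _ => c) = 0 := by
  funext k
  rw [ET_mulVec hst E' hE']
  simp

lemma const_of_ET_mulVec_eq_zero {K : Type*} [Field K] (hst : ∀ k, src k ≠ tgt k)
    (r : Fin N)
    (hqsc : ∀ i : Fin N,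
      Relation.ReflTransGen (fun a b => ∃ k : Fin L, src k = a ∧ tgt k = b) r i)
    (E' : Matrix (Fin N) (Fin L) K)
    (hE' : ∀ i k, E' i k = if i = src k then 1 else if i = tgt k then -1 else 0)
    (y : Fin N → K) (hy : E'ᵀ.mulVec y = 0) : ∀ i, y i = y r := by
  have hedge : ∀ k, y (src k) = y (tgt k) := by
    intro k
    have h := congrFun hy k
    rw [ET_mulVec hst E' hE'] at h
    have h0 : y (src k) - y (tgt k) = 0 := h
    exact sub_eq_zero.mp h0
  intro i
  induction hqsc i with
  | refl => rfl
  | tail hab e ih =>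
    obtain ⟨k, hk1, hk2⟩ := e
    rw [← hk2, ← hedge k, hk1]
    exact ih
section RealLap

variable {N L : ℕ} {src tgt : Fin L → Fin N}
variable {w : Fin L → ℝ}
variable {E Eow : Matrix (Fin N) (Fin L) ℝ}

lemma M_mulVec (hst : ∀ k, src k ≠ tgt k)
    (hE : ∀ i k, E i k = if i = src k then 1 else if i = tgt k then -1 else 0)
    (hEow : ∀ i k, Eow i k = if i = tgt k then -(w k) else 0)
    (x : Fin N → ℝ) (i : Fin N) :
    (Eow * Eᵀ).mulVec x i = ∑ k, if i = tgt k then w k * (x i - x (src k)) else 0 := by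
  rw [← Matrix.mulVec_mulVec]
  have houter : Eow.mulVec (Eᵀ.mulVec x) i
      = ∑ k, Eow i k * (Eᵀ.mulVec x) k := rfl
  rw [houter]
  refine Finset.sum_congr rfl fun k _ => ?_
  rw [ET_mulVec hst E hE, hEow]
  split_ifs with h
  · rw [h]; ring
  · ring

lemma c_nonneg (hN : 0 < N) (hst : ∀ k, src k ≠ tgt k) (hw : ∀ k, 0 < w k)
    (hE : ∀ i k, E i k = if i = src k then 1 else if i = tgt k then -1 else 0)
    (hEow : ∀ i k, Eow i k = if i = tgt k then -(w k) else 0)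
    (x : Fin N → ℝ) (c : ℝ) (hx : (Eow * Eᵀ).mulVec x = fun _ => c) : 0 ≤ c := by
  have : Nonempty (Fin N) := ⟨⟨0, hN⟩⟩
  obtain ⟨i₀, hi₀⟩ := Finite.exists_max x
  have h := congrFun hx i₀
  rw [M_mulVec hst hE hEow] at h
  rw [← h]
  refine Finset.sum_nonneg fun k _ => ?_
  split_ifs with hk
  · exact mul_nonneg (hw k).le (sub_nonneg.2 (hk ▸ hi₀ (src k)))
  · exact le_refl 0

lemma c_zero (hN : 0 < N) (hst : ∀ k, src k ≠ tgt k) (hw : ∀ k, 0 < w k)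
    (hE : ∀ i k, E i k = if i = src k then 1 else if i = tgt k then -1 else 0)
    (hEow : ∀ i k, Eow i k = if i = tgt k then -(w k) else 0)
    (x : Fin N → ℝ) (c : ℝ) (hx : (Eow * Eᵀ).mulVec x = fun _ => c) : c = 0 := by
  have h1 := c_nonneg hN hst hw hE hEow x c hx
  have hx' : (Eow * Eᵀ).mulVec (-x) = fun _ => -c := by
    rw [Matrix.mulVec_neg, hx]; rfl
  have h2 := c_nonneg hN hst hw hE hEow (-x) (-c) hx'
  linarith

lemma le_root (hN : 0 < N) (hst : ∀ k, src k ≠ tgt k) (hw : ∀ k, 0 < w k)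
    (r : Fin N)
    (hqsc : ∀ i : Fin N,
      Relation.ReflTransGen (fun a b => ∃ k : Fin L, src k = a ∧ tgt k = b) r i)
    (hE : ∀ i k, E i k = if i = src k then 1 else if i = tgt k then -1 else 0)
    (hEow : ∀ i k, Eow i k = if i = tgt k then -(w k) else 0)
    (x : Fin N → ℝ) (hx : (Eow * Eᵀ).mulVec x = 0) : ∀ i, x i ≤ x r := by
  have : Nonempty (Fin N) := ⟨⟨0, hN⟩⟩
  obtain ⟨i₀, hi₀⟩ := Finite.exists_max x
  -- propagation along an in-edge at a maximiser
  have hkey : ∀ k, x (tgt k) = x i₀ → x (src k) = x i₀ := by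
    intro k hk
    have h := congrFun hx (tgt k)
    rw [M_mulVec hst hE hEow] at h
    have h0 : ∑ k', (if tgt k = tgt k' then w k' * (x (tgt k) - x (src k')) else 0) = 0 := h
    have hnn : ∀ k' ∈ Finset.univ,
        0 ≤ (if tgt k = tgt k' then w k' * (x (tgt k) - x (src k')) else 0) := by
      intro k' _
      split_ifs with h'
      · exact mul_nonneg (hw k').le (sub_nonneg.2 (hk ▸ hi₀ (src k')))
      · exact le_refl 0
    have hall := (Finset.sum_eq_zero_iff_of_nonneg hnn).1 h0 k (Finset.mem_univ k)
    rw [if_pos rfl] at hall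
    have : x (tgt k) - x (src k) = 0 := by
      rcases mul_eq_zero.1 hall with h' | h'
      · exact absurd h' (hw k).ne'
      · exact h'
    have := sub_eq_zero.mp this
    rw [← this, hk]
  -- go backwards along the path from the root to the maximiser
  have hroot : ∀ i, Relation.ReflTransGen
      (fun a b => ∃ k : Fin L, src k = a ∧ tgt k = b) r i → x i = x i₀ → x r = x i₀ := by
    intro i h
    induction h with
    | refl => exact fun h => h
    | tail hab e ih =>
      intro hc
      obtain ⟨k, hk1, hk2⟩ := e
      apply ih
      rw [← hk1]
      exact hkey k (hk2 ▸ hc)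
  have hr : x r = x i₀ := hroot i₀ (hqsc i₀) rfl
  intro i
  rw [hr]
  exact hi₀ i

lemma const_of_M_zero (hN : 0 < N) (hst : ∀ k, src k ≠ tgt k) (hw : ∀ k, 0 < w k)
    (r : Fin N)
    (hqsc : ∀ i : Fin N,
      Relation.ReflTransGen (fun a b => ∃ k : Fin L, src k = a ∧ tgt k = b) r i)
    (hE : ∀ i k, E i k = if i = src k then 1 else if i = tgt k then -1 else 0)
    (hEow : ∀ i k, Eow i k = if i = tgt k then -(w k) else 0)
    (x : Fin N → ℝ) (hx : (Eow * Eᵀ).mulVec x = 0) : ∀ i, x i = x r := by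
  have h1 := le_root hN hst hw r hqsc hE hEow x hx
  have hx' : (Eow * Eᵀ).mulVec (-x) = 0 := by rw [Matrix.mulVec_neg, hx, neg_zero]
  have h2 := le_root hN hst hw r hqsc hE hEow (-x) hx'
  intro i
  have := h2 i
  simp only [Pi.neg_apply, neg_le_neg_iff] at this
  linarith [h1 i]

/-- packaged hypothesis H2 over ℝ -/
lemma H2R (hN : 0 < N) (hst : ∀ k, src k ≠ tgt k) (hw : ∀ k, 0 < w k)
    (r : Fin N)
    (hqsc : ∀ i : Fin N,
      Relation.ReflTransGen (fun a b => ∃ k : Fin L, src k = a ∧ tgt k = b) r i)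
    (hE : ∀ i k, E i k = if i = src k then 1 else if i = tgt k then -1 else 0)
    (hEow : ∀ i k, Eow i k = if i = tgt k then -(w k) else 0)
    (x : Fin N → ℝ) (c : ℝ) (hx : (Eow * Eᵀ).mulVec x = fun _ => c) :
    c = 0 ∧ ∀ i j, x i = x j := by
  have hc := c_zero hN hst hw hE hEow x c hx
  refine ⟨hc, ?_⟩
  have hx0 : (Eow * Eᵀ).mulVec x = 0 := by rw [hx, hc]; rfl
  have h := const_of_M_zero hN hst hw r hqsc hE hEow x hx0
  intro i j; rw [h i, h j]

end RealLap

section Generic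

variable {N L : ℕ} {K : Type*} [Field K]
variable {Ee Ff : Matrix (Fin N) (Fin L) K}

lemma ker_sq (hN : 0 < N)
    (H1a : ∀ y : Fin N → K, Eeᵀ.mulVec y = 0 → ∀ i j, y i = y j)
    (H1b : ∀ c : K, Eeᵀ.mulVec (fun _ => c) = 0)
    (H2 : ∀ (y : Fin N → K) (c : K), (Ff * Eeᵀ).mulVec y = (fun _ => c) →
      c = 0 ∧ ∀ i j, y i = y j)
    (x : Fin L → K) (h : ((Eeᵀ * Ff) * (Eeᵀ * Ff)).mulVec x = 0) :
    (Eeᵀ * Ff).mulVec x = 0 := by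
  have hassoc : (Eeᵀ * Ff) * (Eeᵀ * Ff) = Eeᵀ * ((Ff * Eeᵀ) * Ff) := by
    simp only [Matrix.mul_assoc]
  rw [hassoc, ← Matrix.mulVec_mulVec, ← Matrix.mulVec_mulVec] at h
  -- h : Eeᵀ *ᵥ ((Ff * Eeᵀ) *ᵥ (Ff *ᵥ x)) = 0
  set y := Ff.mulVec x with hy
  set i0 : Fin N := ⟨0, hN⟩
  have hconst := H1a _ h
  have hMy : (Ff * Eeᵀ).mulVec y = fun _ => ((Ff * Eeᵀ).mulVec y) i0 :=
    funext fun i => hconst i i0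
  obtain ⟨_, hyconst⟩ := H2 y _ hMy
  have hyc : y = fun _ => y i0 := funext fun i => hyconst i i0
  rw [← Matrix.mulVec_mulVec, ← hy, hyc]
  exact H1b _

lemma finrank_ker_eq (hN : 0 < N)
    (H1a : ∀ y : Fin N → K, Eeᵀ.mulVec y = 0 → ∀ i j, y i = y j)
    (H1b : ∀ c : K, Eeᵀ.mulVec (fun _ => c) = 0)
    (H2 : ∀ (y : Fin N → K) (c : K), (Ff * Eeᵀ).mulVec y = (fun _ => c) →
      c = 0 ∧ ∀ i j, y i = y j) :
    Module.finrank K (LinearMap.ker (Eeᵀ * Ff).mulVecLin) = L - (N - 1) := by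
  classical
  set i0 : Fin N := ⟨0, hN⟩
  set one : Fin N → K := fun _ => (1 : K) with hone_def
  have hone : one ≠ 0 := by
    intro h
    have := congrFun h i0
    simp [hone_def] at this
  have hkerE : LinearMap.ker Eeᵀ.mulVecLin = Submodule.span K {one} := by
    ext y
    simp only [LinearMap.mem_ker, Matrix.mulVecLin_apply, Submodule.mem_span_singleton]
    constructor
    · intro h
      refine ⟨y i0, funext fun i => ?_⟩
      simp only [Pi.smul_apply, hone_def, smul_eq_mul, mul_one]
      exact (H1a y h i i0).symm
    · rintro ⟨a, rfl⟩
      have h : (a • one) = fun _ => a := funext fun i => by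
        simp [hone_def]
      rw [h]; exact H1b a
  have hk1 : Module.finrank K (LinearMap.ker Eeᵀ.mulVecLin) = 1 := by
    rw [hkerE]; exact finrank_span_singleton hone
  have hdimN : Module.finrank K (Fin N → K) = N := by simp
  have hdimL : Module.finrank K (Fin L → K) = L := by simp
  have hrankE : Module.finrank K (LinearMap.range Eeᵀ.mulVecLin) = N - 1 := by
    have h := Eeᵀ.mulVecLin.finrank_range_add_finrank_ker
    rw [hk1, hdimN] at h
    omega
  have hkerM : LinearMap.ker (Ff * Eeᵀ).mulVecLin = Submodule.span K {one} := by
    ext y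
    simp only [LinearMap.mem_ker, Matrix.mulVecLin_apply, Submodule.mem_span_singleton]
    constructor
    · intro h
      obtain ⟨_, hconst⟩ := H2 y 0 (by rw [h]; rfl)
      refine ⟨y i0, funext fun i => ?_⟩
      simp only [Pi.smul_apply, hone_def, smul_eq_mul, mul_one]
      exact (hconst i i0).symm
    · rintro ⟨a, rfl⟩
      have h : (a • one) = fun _ => a := funext fun i => by simp [hone_def]
      rw [h, ← Matrix.mulVec_mulVec, H1b a, Matrix.mulVec_zero]
  have hkM1 : Module.finrank K (LinearMap.ker (Ff * Eeᵀ).mulVecLin) = 1 := by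
    rw [hkerM]; exact finrank_span_singleton hone
  have hrankM : Module.finrank K (LinearMap.range (Ff * Eeᵀ).mulVecLin) = N - 1 := by
    have h := (Ff * Eeᵀ).mulVecLin.finrank_range_add_finrank_ker
    rw [hkM1, hdimN] at h
    omega
  have hkerM2 : LinearMap.ker ((Ff * Eeᵀ) * (Ff * Eeᵀ)).mulVecLin
      = LinearMap.ker (Ff * Eeᵀ).mulVecLin := by
    ext y
    simp only [LinearMap.mem_ker, Matrix.mulVecLin_apply]
    constructor
    · intro h
      rw [← Matrix.mulVec_mulVec] at h
      obtain ⟨_, hconst⟩ := H2 ((Ff * Eeᵀ).mulVec y) 0 (by rw [h]; rfl)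
      have hMy : (Ff * Eeᵀ).mulVec y = fun _ => ((Ff * Eeᵀ).mulVec y) i0 :=
        funext fun i => hconst i i0
      obtain ⟨hc, _⟩ := H2 y _ hMy
      rw [hMy, hc]; rfl
    · intro h
      rw [← Matrix.mulVec_mulVec, h, Matrix.mulVec_zero]
  have hrankM2 : Module.finrank K
      (LinearMap.range ((Ff * Eeᵀ) * (Ff * Eeᵀ)).mulVecLin) = N - 1 := by
    have h := ((Ff * Eeᵀ) * (Ff * Eeᵀ)).mulVecLin.finrank_range_add_finrank_ker
    rw [hkerM2, hkM1, hdimN] at h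
    omega
  -- rank of A = Eeᵀ * Ff
  have hle : Module.finrank K (LinearMap.range (Eeᵀ * Ff).mulVecLin) ≤ N - 1 := by
    rw [← hrankE]
    apply Submodule.finrank_mono
    rw [Matrix.mulVecLin_mul]
    exact LinearMap.range_comp_le_range _ _
  have hge : N - 1 ≤ Module.finrank K (LinearMap.range (Eeᵀ * Ff).mulVecLin) := by
    have hfact : (Ff * Eeᵀ) * (Ff * Eeᵀ) = Ff * ((Eeᵀ * Ff) * Eeᵀ) := by
      simp only [Matrix.mul_assoc]
    have h1 : Module.finrank K
        ((LinearMap.range ((Eeᵀ * Ff) * Eeᵀ).mulVecLin).map Ff.mulVecLin)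
        ≤ Module.finrank K (LinearMap.range ((Eeᵀ * Ff) * Eeᵀ).mulVecLin) :=
      Submodule.finrank_map_le _ _
    have h2 : Module.finrank K (LinearMap.range ((Eeᵀ * Ff) * Eeᵀ).mulVecLin)
        ≤ Module.finrank K (LinearMap.range (Eeᵀ * Ff).mulVecLin) := by
      apply Submodule.finrank_mono
      rw [Matrix.mulVecLin_mul]
      exact LinearMap.range_comp_le_range _ _
    rw [← hrankM2, hfact, Matrix.mulVecLin_mul, LinearMap.range_comp]
    exact le_trans h1 h2
  have hrA : Module.finrank K (LinearMap.range (Eeᵀ * Ff).mulVecLin) = N - 1 :=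
    le_antisymm hle hge
  have h := (Eeᵀ * Ff).mulVecLin.finrank_range_add_finrank_ker
  rw [hrA, hdimL] at h
  have hNL : N - 1 ≤ L := by
    rw [← hrA]
    have := Submodule.finrank_le (LinearMap.range (Eeᵀ * Ff).mulVecLin)
    rw [hdimL] at this
    exact this
  omega

end Generic
section ComplexTransfer

variable {N L : ℕ} {src tgt : Fin L → Fin N}

lemma re_mulVec {a b : ℕ} (P : Matrix (Fin a) (Fin b) ℝ) (v : Fin b → ℂ) (j : Fin a) :
    ((P.map Complex.ofReal).mulVec v j).re = P.mulVec (fun i => (v i).re) j := by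
  simp only [Matrix.mulVec, dotProduct, Matrix.map_apply]
  rw [Complex.re_sum]
  refine Finset.sum_congr rfl fun i _ => ?_
  simp [Complex.mul_re]

lemma im_mulVec {a b : ℕ} (P : Matrix (Fin a) (Fin b) ℝ) (v : Fin b → ℂ) (j : Fin a) :
    ((P.map Complex.ofReal).mulVec v j).im = P.mulVec (fun i => (v i).im) j := by
  simp only [Matrix.mulVec, dotProduct, Matrix.map_apply]
  rw [Complex.im_sum]
  refine Finset.sum_congr rfl fun i _ => ?_
  simp [Complex.mul_im]

lemma map_mul_ofReal {a b c : ℕ} (P : Matrix (Fin a) (Fin b) ℝ) (Q : Matrix (Fin b) (Fin c) ℝ) :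
    (P.map Complex.ofReal) * (Q.map Complex.ofReal) = (P * Q).map Complex.ofReal := by
  have : (Complex.ofReal : ℝ → ℂ) = ⇑Complex.ofRealHom := rfl
  rw [this, Matrix.map_mul]

lemma transpose_map_ofReal {a b : ℕ} (P : Matrix (Fin a) (Fin b) ℝ) :
    (P.map Complex.ofReal)ᵀ = Pᵀ.map Complex.ofReal := by
  rw [Matrix.transpose_map]

/-- packaged hypothesis H2 over ℂ, by reduction to the real statement -/
lemma H2C {w : Fin L → ℝ} {E Eow : Matrix (Fin N) (Fin L) ℝ}
    (hN : 0 < N) (hst : ∀ k, src k ≠ tgt k) (hw : ∀ k, 0 < w k)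
    (r : Fin N)
    (hqsc : ∀ i : Fin N,
      Relation.ReflTransGen (fun a b => ∃ k : Fin L, src k = a ∧ tgt k = b) r i)
    (hE : ∀ i k, E i k = if i = src k then 1 else if i = tgt k then -1 else 0)
    (hEow : ∀ i k, Eow i k = if i = tgt k then -(w k) else 0)
    (y : Fin N → ℂ) (c : ℂ)
    (h : ((Eow.map Complex.ofReal) * (E.map Complex.ofReal)ᵀ).mulVec y = fun _ => c) :
    c = 0 ∧ ∀ i j, y i = y j := by
  rw [transpose_map_ofReal, map_mul_ofReal] at h
  have hre : (Eow * Eᵀ).mulVec (fun i => (y i).re) = fun _ => c.re := by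
    funext j
    rw [← re_mulVec, h]
  have him : (Eow * Eᵀ).mulVec (fun i => (y i).im) = fun _ => c.im := by
    funext j
    rw [← im_mulVec, h]
  obtain ⟨hcre, hconre⟩ := H2R hN hst hw r hqsc hE hEow _ _ hre
  obtain ⟨hcim, hconim⟩ := H2R hN hst hw r hqsc hE hEow _ _ him
  constructor
  · exact Complex.ext hcre hcim
  · intro i j
    exact Complex.ext (hconre i j) (hconim i j)

end ComplexTransfer
end EdgeLapAux
/-- If `G` is quasi-strongly connected, then zero is a simple root of the
minimal polynomial of the edge Laplacian `L_e = Eᵀ * E_⊙^w`, i.e. the zero eigenvalue of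
`L_e` is semisimple: its geometric multiplicity (the dimension of the kernel) equals its
algebraic multiplicity `L − N + 1`. -/
theorem edge_laplacian_zero_eigenvalue_semisimple
    (N L : ℕ) (hN : 0 < N) (src tgt : Fin L → Fin N) (hst : ∀ k, src k ≠ tgt k)
    (w : Fin L → ℝ) (hw : ∀ k, 0 < w k)
    (hqsc : ∃ r : Fin N, ∀ i : Fin N,
      Relation.ReflTransGen (fun a b => ∃ k : Fin L, src k = a ∧ tgt k = b) r i)
    (E Eow : Matrix (Fin N) (Fin L) ℝ)
    (hE : ∀ i k, E i k = if i = src k then 1 else if i = tgt k then -1 else 0)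
    (hEow : ∀ i k, Eow i k = if i = tgt k then -(w k) else 0) :
    Polynomial.rootMultiplicity 0 (minpoly ℝ (Eᵀ * Eow)) ≤ 1 ∧
    Module.finrank ℝ (LinearMap.ker (Eᵀ * Eow).mulVecLin) = L - (N - 1) ∧
    ((Eᵀ * Eow).map Complex.ofReal).charpoly.roots.count 0 = L - (N - 1) := by
  classical
  obtain ⟨r, hqsc⟩ := hqsc
  -- real hypotheses for the generic lemmas
  have H1aR : ∀ y : Fin N → ℝ, Eᵀ.mulVec y = 0 → ∀ i j, y i = y j := by
    intro y hy i j
    have h := EdgeLapAux.const_of_ET_mulVec_eq_zero hst r hqsc E hE y hy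
    rw [h i, h j]
  have H1bR : ∀ c : ℝ, Eᵀ.mulVec (fun _ => c) = 0 :=
    fun c => EdgeLapAux.ET_mulVec_const hst E hE c
  have H2R' : ∀ (y : Fin N → ℝ) (c : ℝ), (Eow * Eᵀ).mulVec y = (fun _ => c) →
      c = 0 ∧ ∀ i j, y i = y j :=
    fun y c h => EdgeLapAux.H2R hN hst hw r hqsc hE hEow y c h
  have hker2 : ∀ x, ((Eᵀ * Eow) * (Eᵀ * Eow)).mulVec x = 0 → (Eᵀ * Eow).mulVec x = 0 :=
    fun x h => EdgeLapAux.ker_sq hN H1aR H1bR H2R' x h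
  -- complex matrices
  set Ec : Matrix (Fin N) (Fin L) ℂ := E.map Complex.ofReal with hEc
  set Eowc : Matrix (Fin N) (Fin L) ℂ := Eow.map Complex.ofReal with hEowc
  have hEcent : ∀ i k, Ec i k = if i = src k then 1 else if i = tgt k then -1 else 0 := by
    intro i k
    rw [hEc, Matrix.map_apply, hE]
    split_ifs <;> simp
  have H1aC : ∀ y : Fin N → ℂ, Ecᵀ.mulVec y = 0 → ∀ i j, y i = y j := by
    intro y hy i j
    have h := EdgeLapAux.const_of_ET_mulVec_eq_zero hst r hqsc Ec hEcent y hy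
    rw [h i, h j]
  have H1bC : ∀ c : ℂ, Ecᵀ.mulVec (fun _ => c) = 0 :=
    fun c => EdgeLapAux.ET_mulVec_const hst Ec hEcent c
  have H2C' : ∀ (y : Fin N → ℂ) (c : ℂ), (Eowc * Ecᵀ).mulVec y = (fun _ => c) →
      c = 0 ∧ ∀ i j, y i = y j :=
    fun y c h => EdgeLapAux.H2C hN hst hw r hqsc hE hEow y c h
  have hker2C : ∀ x, ((Ecᵀ * Eowc) * (Ecᵀ * Eowc)).mulVec x = 0 →
      (Ecᵀ * Eowc).mulVec x = 0 :=
    fun x h => EdgeLapAux.ker_sq hN H1aC H1bC H2C' x h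
  have hBeq : Ecᵀ * Eowc = (Eᵀ * Eow).map Complex.ofReal := by
    rw [hEc, hEowc, EdgeLapAux.transpose_map_ofReal, EdgeLapAux.map_mul_ofReal]
  refine ⟨?_, ?_, ?_⟩
  · -- Part 1 : root multiplicity of the minimal polynomial
    by_contra hm
    push_neg at hm
    set A := Eᵀ * Eow with hA
    set p := minpoly ℝ A with hp
    have hint : IsIntegral ℝ A := IsIntegral.of_finite ℝ A
    have hp0 : p ≠ 0 := minpoly.ne_zero hint
    have hdvd : X ^ 2 ∣ p := by
      have h1 := Polynomial.pow_rootMultiplicity_dvd p 0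
      rw [map_zero, sub_zero] at h1
      exact dvd_trans (pow_dvd_pow X hm) h1
    obtain ⟨q, hq⟩ := hdvd
    have hq0 : q ≠ 0 := by
      rintro rfl
      rw [mul_zero] at hq
      exact hp0 hq
    have haev : Polynomial.aeval A p = 0 := minpoly.aeval ℝ A
    rw [hq, _root_.map_mul, map_pow, Polynomial.aeval_X] at haev
    set Bq := Polynomial.aeval A q with hBq
    have hzero : A * Bq = 0 := by
      have hv : ∀ v, (A * Bq).mulVec v = 0 := by
        intro v
        have h2 : ((A * A) * Bq).mulVec v = 0 := by
          rw [← pow_two, haev, Matrix.zero_mulVec]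
        rw [← Matrix.mulVec_mulVec] at h2
        have h3 := hker2 _ h2
        rw [← Matrix.mulVec_mulVec]
        exact h3
      ext i j
      have h := congrFun (hv (Pi.single j 1)) i
      rw [Matrix.mulVec_single] at h
      simpa using h
    have hann : Polynomial.aeval A (X * q) = 0 := by
      rw [_root_.map_mul, Polynomial.aeval_X, ← hBq, hzero]
    have hdvd2 : p ∣ X * q := minpoly.dvd ℝ A hann
    have hXq : X * q ≠ 0 := mul_ne_zero Polynomial.X_ne_zero hq0
    have hdeg := Polynomial.natDegree_le_of_dvd hdvd2 hXq
    rw [hq, Polynomial.natDegree_mul (pow_ne_zero 2 Polynomial.X_ne_zero) hq0,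
      Polynomial.natDegree_mul Polynomial.X_ne_zero hq0,
      Polynomial.natDegree_X_pow, Polynomial.natDegree_X] at hdeg
    omega
  · -- Part 2 : dimension of the kernel
    exact EdgeLapAux.finrank_ker_eq hN H1aR H1bR H2R'
  · -- Part 3 : algebraic multiplicity over ℂ
    set B : Matrix (Fin L) (Fin L) ℂ := (Eᵀ * Eow).map Complex.ofReal with hB
    have hker2B : ∀ x, (B * B).mulVec x = 0 → B.mulVec x = 0 := by
      rw [← hBeq]; exact hker2C
    have hdim : Module.finrank ℂ (LinearMap.ker B.mulVecLin) = L - (N - 1) := by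
      rw [← hBeq]
      exact EdgeLapAux.finrank_ker_eq hN H1aC H1bC H2C'
    set φ : Module.End ℂ (Fin L → ℂ) := B.mulVecLin with hφ
    -- the charpoly of the matrix is the charpoly of the endomorphism
    have h3 : B.charpoly = LinearMap.charpoly φ := by
      have h4 : LinearMap.toMatrix' φ = B := by
        rw [hφ, ← Matrix.toLin'_apply', LinearMap.toMatrix'_toLin']
      rw [← LinearMap.charpoly_toMatrix φ (Pi.basisFun ℂ (Fin L)),
        LinearMap.toMatrix_eq_toMatrix', h4]
    -- powers of φ have the same kernel as φ
    have hpow : ∀ (n : ℕ) (v : Fin L → ℂ), (φ ^ (n + 1)) v = 0 → φ v = 0 := by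
      intro n
      induction n with
      | zero => intro v h; rwa [pow_one] at h
      | succ n ih =>
        intro v h
        rw [pow_succ, Module.End.mul_apply] at h
        have h2 := ih (φ v) h
        have h3 : (B * B).mulVec v = 0 := by
          rw [← Matrix.mulVec_mulVec]
          exact h2
        exact hker2B v h3
    have h5 : φ.maxGenEigenspace 0 = LinearMap.ker φ := by
      ext v
      rw [Module.End.mem_maxGenEigenspace]
      simp only [zero_smul, sub_zero, LinearMap.mem_ker]
      constructor
      · rintro ⟨k, hk⟩
        cases k with
        | zero =>
          rw [pow_zero] at hk
          have hv : v = 0 := by simpa using hk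
          rw [hv]
          exact map_zero φ
        | succ n => exact hpow n v hk
      · intro h
        exact ⟨1, by rwa [pow_one]⟩
    have h6 := LinearMap.finrank_maxGenEigenspace_zero_eq φ
    rw [h5] at h6
    rw [Polynomial.count_roots, Polynomial.rootMultiplicity_eq_natTrailingDegree',
      h3, ← h6]
    exact hdim
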